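/- Let κ, β_i, γ̃_ij, A_ij, Γ_i be smooth fields on ℝ × ℝ³ satisfying the linearized BSSN evolution equations (E4) and (E6). Then at every point of ℝ × ℝ³ and for each i, ∂_t(Γ_i − ∂_l γ̃_il) = 2 M_i, where M_i := ∂_l A_il − (2/3)∂_i κ. In particular, if the momentum constraint M_i = 0 holds everywhere, then the constraint quantity Γ_i − ∂_l γ̃_il is independent of time. -/

import Mathlib

noncomputable section

/-- Spacetime ℝ × ℝ³. -/
abbrev Spc : Type := ℝ × (Fin 3 → ℝ)

/-- Time derivative ∂_t. -/
noncomputable def pt (f : Spc → ℝ) : Spc → ℝ :=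
  fun p => deriv (fun s => f (s, p.2)) p.1

/-- Spatial partial derivative ∂_i. -/
noncomputable def ps (i : Fin 3) (f : Spc → ℝ) : Spc → ℝ :=
  fun p => deriv (fun s => f (p.1, Function.update p.2 i s)) (p.2 i)

/-- Spatial Laplacian Δ = Σ_i ∂_i ∂_i. -/
noncomputable def lap (f : Spc → ℝ) : Spc → ℝ :=
  fun p => ∑ i : Fin 3, ps i (ps i f) p

/-- Kronecker delta δ_ij. -/
noncomputable def kron (i j : Fin 3) : ℝ := if i = j then 1 else 0

namespace BSSNaux

/-- spatial unit direction -/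
def e (i : Fin 3) : Spc := (0, Pi.single i 1)

/-- time direction -/
def T : Spc := (1, 0)

lemma smoothD {f : Spc → ℝ} (hf : ContDiff ℝ (⊤ : ℕ∞) f) (v : Spc) :
    ContDiff ℝ (⊤ : ℕ∞) (fun p => fderiv ℝ f p v) :=
  (hf.fderiv_right (m := (⊤:ℕ∞)) (by simp)).clm_apply contDiff_const

lemma diffD {f : Spc → ℝ} (hf : ContDiff ℝ (⊤ : ℕ∞) f) (v : Spc) :
    Differentiable ℝ (fun p => fderiv ℝ f p v) :=
  (smoothD hf v).differentiable (by simp)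

lemma pt_eq {f : Spc → ℝ} (hf : ContDiff ℝ (⊤ : ℕ∞) f) :
    pt f = fun p => fderiv ℝ f p T := by
  funext p
  have h1 : HasDerivAt (fun s : ℝ => ((s, p.2) : Spc)) T p.1 :=
    (hasDerivAt_id p.1).prodMk (hasDerivAt_const p.1 p.2)
  have h2 : HasDerivAt (fun s : ℝ => f (s, p.2)) (fderiv ℝ f p T) p.1 := by
    have := ((hf.differentiable (by simp) (p.1, p.2)).hasFDerivAt).comp_hasDerivAt p.1 h1
    exact this
  exact h2.deriv

lemma upd_hasDerivAt (x : Fin 3 → ℝ) (i : Fin 3) (s : ℝ) :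
    HasDerivAt (fun s => Function.update x i s) (Pi.single i 1) s := by
  rw [hasDerivAt_pi]
  intro j
  by_cases h : j = i
  · subst h
    simp only [Function.update_self, Pi.single_eq_same]
    exact hasDerivAt_id' s
  · simp only [Function.update, dif_neg h, Pi.single, Function.update, dif_neg h]
    exact hasDerivAt_const s (x j)

lemma ps_eq {f : Spc → ℝ} (hf : ContDiff ℝ (⊤ : ℕ∞) f) (i : Fin 3) :
    ps i f = fun p => fderiv ℝ f p (e i) := by
  funext p
  have h1 : HasDerivAt (fun s : ℝ => ((p.1, Function.update p.2 i s) : Spc))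
      (e i) (p.2 i) :=
    (hasDerivAt_const (p.2 i) p.1).prodMk (upd_hasDerivAt p.2 i (p.2 i))
  have h2 : HasDerivAt (fun s : ℝ => f (p.1, Function.update p.2 i s))
      (fderiv ℝ f p (e i)) (p.2 i) := by
    have h3 := ((hf.differentiable (by simp)
      ((p.1, Function.update p.2 i (p.2 i)) : Spc)).hasFDerivAt).comp_hasDerivAt (p.2 i) h1
    rw [Function.update_eq_self] at h3
    exact h3
  exact h2.deriv

lemma comm {f : Spc → ℝ} (hf : ContDiff ℝ (⊤ : ℕ∞) f) (v w : Spc) :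
    (fun p => fderiv ℝ (fun q => fderiv ℝ f q v) p w)
      = fun p => fderiv ℝ (fun q => fderiv ℝ f q w) p v := by
  funext p
  have hd : DifferentiableAt ℝ (fderiv ℝ f) p :=
    ((hf.fderiv_right (m := (⊤:ℕ∞)) (by simp)).differentiable (by simp)) p
  have key : ∀ a b : Spc, fderiv ℝ (fun q => fderiv ℝ f q a) p b
      = fderiv ℝ (fderiv ℝ f) p b a := by
    intro a b
    rw [fderiv_clm_apply hd (differentiableAt_const a)]
    simp
  rw [key v w, key w v]
  have hsym : IsSymmSndFDerivAt ℝ f p := by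
    apply hf.contDiffAt.isSymmSndFDerivAt
    rw [minSmoothness_of_isRCLikeNormedField]
    exact WithTop.coe_le_coe.mpr (le_top : (2 : ℕ∞) ≤ ⊤)
  exact hsym w v

end BSSNaux

open BSSNaux Finset in
theorem Gamma_definition_constraint_evolution
    (κ : Spc → ℝ) (β Γ : Fin 3 → Spc → ℝ)
    (γ A : Fin 3 → Fin 3 → Spc → ℝ)
    (hκ : ContDiff ℝ (⊤ : ℕ∞) κ)
    (hβ : ∀ i, ContDiff ℝ (⊤ : ℕ∞) (β i)) (hΓ : ∀ i, ContDiff ℝ (⊤ : ℕ∞) (Γ i))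
    (hγ : ∀ i j, ContDiff ℝ (⊤ : ℕ∞) (γ i j)) (hA : ∀ i j, ContDiff ℝ (⊤ : ℕ∞) (A i j))
    (hγsym : ∀ i j, γ i j = γ j i) (hAsym : ∀ i j, A i j = A j i)
    (E4 : ∀ i j p, pt (γ i j) p =
      -2 * A i j p + ps i (β j) p + ps j (β i) p
        - (2/3) * kron i j * ∑ l, ps l (β l) p)
    (E6 : ∀ i p, pt (Γ i) p =
      -(4/3) * ps i κ p + (1/3) * ps i (fun q => ∑ l, ps l (β l) q) p + lap (β i) p)
    (M : Fin 3 → Spc → ℝ)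
    (hM : ∀ i, M i = fun p => (∑ l, ps l (A i l) p) - (2/3) * ps i κ p) :
    (∀ i p, pt (fun q => Γ i q - ∑ l, ps l (γ i l) q) p = 2 * M i p) ∧
      ((∀ i p, M i p = 0) → ∀ i, ∀ t₁ t₂ : ℝ, ∀ x : Fin 3 → ℝ,
        Γ i (t₁, x) - (∑ l, ps l (γ i l) (t₁, x)) =
          Γ i (t₂, x) - (∑ l, ps l (γ i l) (t₂, x))) := by
  classical
  -- abbreviations
  have hpsβ : ∀ (m j : Fin 3), ps j (β m) = fun q => fderiv ℝ (β m) q (e j) :=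
    fun m j => ps_eq (hβ m) j
  have hdivβ : ContDiff ℝ (⊤ : ℕ∞) (fun q => ∑ l, fderiv ℝ (β l) q (e l)) :=
    ContDiff.sum fun l _ => smoothD (hβ l) (e l)
  have hpsγ : ∀ i l, ps l (γ i l) = fun q => fderiv ℝ (γ i l) q (e l) :=
    fun i l => ps_eq (hγ i l) l
  have hFsm : ∀ i, ContDiff ℝ (⊤ : ℕ∞)
      (fun q => Γ i q - ∑ l, fderiv ℝ (γ i l) q (e l)) :=
    fun i => (hΓ i).sub (ContDiff.sum fun l _ => smoothD (hγ i l) (e l))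
  have key : ∀ i p, pt (fun q => Γ i q - ∑ l, ps l (γ i l) q) p = 2 * M i p := by
    intro i p
    simp only [hpsγ]
    rw [congrFun (pt_eq (hFsm i)) p]
    -- split the fderiv of the difference
    rw [fderiv_fun_sub (((hΓ i).differentiable (by simp)) p)
      (DifferentiableAt.fun_sum (fun l _ => diffD (hγ i l) (e l) p))]
    rw [ContinuousLinearMap.sub_apply]
    rw [fderiv_fun_sum (fun l _ => diffD (hγ i l) (e l) p)]
    rw [ContinuousLinearMap.sum_apply]
    -- commute t and l derivatives, then use E4
    have hc : ∀ l : Fin 3, fderiv ℝ (fun q => fderiv ℝ (γ i l) q (e l)) p T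
        = fderiv ℝ (fun q => -2 * A i l q + fderiv ℝ (β l) q (e i)
            + fderiv ℝ (β i) q (e l)
            - 2/3 * kron i l * ∑ m, fderiv ℝ (β m) q (e m)) p (e l) := by
      intro l
      rw [congrFun (comm (hγ i l) (e l) T) p]
      have hfun : (fun q => fderiv ℝ (γ i l) q T)
          = fun q => -2 * A i l q + fderiv ℝ (β l) q (e i) + fderiv ℝ (β i) q (e l)
              - 2/3 * kron i l * ∑ m, fderiv ℝ (β m) q (e m) := by
        funext q
        rw [← congrFun (pt_eq (hγ i l)) q, E4 i l q]
        simp only [hpsβ]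
      rw [hfun]
    simp only [hc]
    -- expand the fderiv of the E4 right-hand side
    have hexp : ∀ l : Fin 3,
        fderiv ℝ (fun q => -2 * A i l q + fderiv ℝ (β l) q (e i)
            + fderiv ℝ (β i) q (e l)
            - 2/3 * kron i l * ∑ m, fderiv ℝ (β m) q (e m)) p (e l)
        = -2 * fderiv ℝ (A i l) p (e l)
          + fderiv ℝ (fun q => fderiv ℝ (β l) q (e i)) p (e l)
          + fderiv ℝ (fun q => fderiv ℝ (β i) q (e l)) p (e l)
          - 2/3 * kron i l
              * fderiv ℝ (fun q => ∑ m, fderiv ℝ (β m) q (e m)) p (e l) := by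
      intro l
      have d1 : DifferentiableAt ℝ (A i l) p :=
        ((hA i l).differentiable (by simp)) p
      have d2 : DifferentiableAt ℝ (fun q => fderiv ℝ (β l) q (e i)) p :=
        diffD (hβ l) (e i) p
      have d3 : DifferentiableAt ℝ (fun q => fderiv ℝ (β i) q (e l)) p :=
        diffD (hβ i) (e l) p
      have d4 : DifferentiableAt ℝ (fun q => ∑ m, fderiv ℝ (β m) q (e m)) p :=
        (hdivβ.differentiable (by simp)) p
      rw [fderiv_fun_sub (((d1.const_mul _).fun_add d2).fun_add d3) (d4.const_mul _),
        fderiv_fun_add ((d1.const_mul _).fun_add d2) d3,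
        fderiv_fun_add (d1.const_mul _) d2,
        fderiv_const_mul d1 (-2 : ℝ), fderiv_const_mul d4 (2/3 * kron i l)]
      simp [mul_comm]
    simp only [hexp]
    -- break the sum into four pieces
    rw [show ∀ (f g h k : Fin 3 → ℝ),
        (∑ l, (f l + g l + h l - k l)) = (∑ l, f l) + (∑ l, g l) + (∑ l, h l) - ∑ l, k l
      from fun f g h k => by
        simp [Finset.sum_add_distrib, Finset.sum_sub_distrib]]
    -- piece 1
    have p1 : (∑ l, -2 * fderiv ℝ (A i l) p (e l))
        = -2 * ∑ l, fderiv ℝ (A i l) p (e l) := by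
      rw [Finset.mul_sum]
    -- piece 2 : commute and recombine into the divergence
    have p2 : (∑ l, fderiv ℝ (fun q => fderiv ℝ (β l) q (e i)) p (e l))
        = fderiv ℝ (fun q => ∑ m, fderiv ℝ (β m) q (e m)) p (e i) := by
      rw [fderiv_fun_sum (fun m _ => diffD (hβ m) (e m) p), ContinuousLinearMap.sum_apply]
      refine Finset.sum_congr rfl fun l _ => ?_
      exact congrFun (comm (hβ l) (e i) (e l)) p
    -- piece 4 : Kronecker delta collapses the sum
    have p4 : (∑ l, 2/3 * kron i l
          * fderiv ℝ (fun q => ∑ m, fderiv ℝ (β m) q (e m)) p (e l))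
        = 2/3 * fderiv ℝ (fun q => ∑ m, fderiv ℝ (β m) q (e m)) p (e i) := by
      simp [kron, ite_mul, mul_ite, mul_assoc]
    rw [p1, p2, p4]
    -- now rewrite the E6 side
    have hΓi : fderiv ℝ (Γ i) p T
        = -(4/3) * fderiv ℝ κ p (e i)
          + 1/3 * fderiv ℝ (fun q => ∑ m, fderiv ℝ (β m) q (e m)) p (e i)
          + ∑ l, fderiv ℝ (fun q => fderiv ℝ (β i) q (e l)) p (e l) := by
      rw [← congrFun (pt_eq (hΓ i)) p, E6 i p]
      have h1 : (fun q => ∑ l, ps l (β l) q)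
          = fun q => ∑ m, fderiv ℝ (β m) q (e m) := by
        funext q; simp only [hpsβ]
      rw [congrFun (ps_eq hκ i) p, h1, congrFun (ps_eq hdivβ i) p]
      have h2 : lap (β i) p = ∑ l, fderiv ℝ (fun q => fderiv ℝ (β i) q (e l)) p (e l) := by
        unfold lap
        refine Finset.sum_congr rfl fun l _ => ?_
        rw [hpsβ i l, congrFun (ps_eq (smoothD (hβ i) (e l)) l) p]
      rw [h2]
    rw [hΓi, hM i]
    simp only [hpsγ i, congrFun (ps_eq hκ i) p]
    have hAps : ∀ l, ps l (A i l) p = fderiv ℝ (A i l) p (e l) :=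
      fun l => congrFun (ps_eq (hA i l) l) p
    simp only [hAps]
    ring
  refine ⟨key, ?_⟩
  intro hM0 i t₁ t₂ x
  have hg : Differentiable ℝ (fun s : ℝ => (fun q => Γ i q - ∑ l, fderiv ℝ (γ i l) q (e l)) (s, x)) := by
    have := (hFsm i).differentiable (by simp)
    exact this.comp (differentiable_id.prodMk (differentiable_const x))
  have hzero : ∀ s, deriv (fun s : ℝ =>
      (fun q => Γ i q - ∑ l, fderiv ℝ (γ i l) q (e l)) (s, x)) s = 0 := by
    intro s
    have h1 := key i (s, x)
    simp only [hpsγ] at h1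
    rw [hM0 i (s, x), mul_zero] at h1
    simpa [pt] using h1
  have hconst := is_const_of_deriv_eq_zero hg hzero t₁ t₂
  simp only [hpsγ]
  simpa using hconst
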